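/- Let g be a reduced-or-not word of length n in α, α⁻¹, β, β⁻¹ with a(g) = b(g) = 0, and let n_α (resp. n_β) be the number of letters equal to α (resp. β), so n = 2(n_α + n_β). Then ν(g) ≤ n_α · n_β ≤ (n/4)². -/

import Mathlib

/-! Common setup: free group on two generators, Heisenberg group of unipotent
upper-triangular 3×3 integer matrices, the Heisenberg invariant. -/

noncomputable section

/-- The free group on two generators. -/
abbrev F : Type := FreeGroup Bool

/-- The generator `α` of the free group. -/
def Wα : F := FreeGroup.of false

/-- The generator `β` of the free group. -/
def Wβ : F := FreeGroup.of true

/-- `F₃`, the third term of the lower central series `F₁ = F`, `F_{n+1} = [F, Fₙ]`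
(Mathlib's `lowerCentralSeries` is 0-indexed). -/
abbrev F₃ : Subgroup F := (⊤ : Subgroup F).lowerCentralSeries 2

/-- `H = F/F₃`. -/
abbrev H : Type := F ⧸ F₃

/-- The unipotent upper-triangular matrix `M(a,b,c)`. -/
def Mmat (a b c : ℤ) : Matrix (Fin 3) (Fin 3) ℤ := !![1, a, c; 0, 1, b; 0, 0, 1]

theorem Mmat_mul (a b c a' b' c' : ℤ) :
    Mmat a b c * Mmat a' b' c' = Mmat (a + a') (b + b') (c + c' + a * b') := by
  simp [Mmat, Matrix.mul_fin_three]; ring_nf; (try simp)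

theorem Mmat_zero : Mmat 0 0 0 = 1 := by
  simp [Mmat, Matrix.one_fin_three]

/-- `M(a,b,c)` as a unit of the matrix ring. -/
def Munit (a b c : ℤ) : (Matrix (Fin 3) (Fin 3) ℤ)ˣ :=
  ⟨Mmat a b c, Mmat (-a) (-b) (a * b - c),
    by rw [Mmat_mul]; rw [show a + -a = 0 by ring, show b + -b = 0 by ring,
      show c + (a*b - c) + a * (-b) = 0 by ring]; exact Mmat_zero,
    by rw [Mmat_mul]; rw [show -a + a = 0 by ring, show -b + b = 0 by ring,
      show (a*b - c) + c + (-a) * b = 0 by ring]; exact Mmat_zero⟩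

theorem Munit_mul (a b c a' b' c' : ℤ) :
    Munit a b c * Munit a' b' c' = Munit (a + a') (b + b') (c + c' + a * b') :=
  Units.ext (Mmat_mul a b c a' b' c')

theorem Munit_one : Munit 0 0 0 = 1 := Units.ext Mmat_zero

theorem Munit_inv (a b c : ℤ) : (Munit a b c)⁻¹ = Munit (-a) (-b) (a * b - c) :=
  Units.ext rfl

theorem Munit_congr {a b c a' b' c' : ℤ} (h1 : a = a') (h2 : b = b') (h3 : c = c') :
    Munit a b c = Munit a' b' c' := by subst h1; subst h2; subst h3; rfl

/-- The integer Heisenberg group, as the subgroup of units of the `3×3` integer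
matrix ring consisting of the unipotent upper-triangular matrices `M(a,b,c)`. -/
def Heis : Subgroup (Matrix (Fin 3) (Fin 3) ℤ)ˣ where
  carrier := {x | ∃ a b c : ℤ, x = Munit a b c}
  one_mem' := ⟨0, 0, 0, Munit_one.symm⟩
  mul_mem' := by
    rintro x y ⟨a, b, c, rfl⟩ ⟨a', b', c', rfl⟩
    exact ⟨_, _, _, Munit_mul a b c a' b' c'⟩
  inv_mem' := by
    rintro x ⟨a, b, c, rfl⟩
    exact ⟨_, _, _, Munit_inv a b c⟩

/-- The homomorphism `Ψ : F → ℍ` with `Ψ(α) = M(1,0,0)` and `Ψ(β) = M(0,1,0)`. -/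
def Ψ : F →* (Matrix (Fin 3) (Fin 3) ℤ)ˣ :=
  FreeGroup.lift fun x => if x then Munit 0 1 0 else Munit 1 0 0

theorem Ψ_mem (g : F) : Ψ g ∈ Heis := by
  induction g using FreeGroup.induction_on with
  | C1 => exact Heis.one_mem
  | of x => cases x <;> · show Ψ (FreeGroup.of _) ∈ Heis; rw [Ψ, FreeGroup.lift_apply_of]; exact ⟨_, _, _, rfl⟩
  | inv_of x hx => rw [map_inv]; exact Heis.inv_mem hx
  | mul x y hx hy => rw [map_mul]; exact Heis.mul_mem hx hy

open scoped commutatorElement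

theorem Munit_commutator (a b c a' b' c' : ℤ) :
    ⁅Munit a b c, Munit a' b' c'⁆ = Munit 0 0 (a * b' - a' * b) := by
  rw [commutatorElement_def, Munit_inv, Munit_inv, Munit_mul, Munit_mul, Munit_mul]
  exact Munit_congr (by ring) (by ring) (by ring)

theorem Munit_central (z a b c : ℤ) : Munit 0 0 z * Munit a b c = Munit a b c * Munit 0 0 z := by
  rw [Munit_mul, Munit_mul]; exact Munit_congr (by ring) (by ring) (by ring)

theorem Heis_comm_central (g : F) (hg : g ∈ (⁅(⊤ : Subgroup F), ⊤⁆ : Subgroup F)) :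
    Ψ g ∈ Subgroup.centralizer (Heis : Set (Matrix (Fin 3) (Fin 3) ℤ)ˣ) := by
  have hle : (⁅(⊤ : Subgroup F), ⊤⁆ : Subgroup F) ≤
      Subgroup.comap Ψ (Subgroup.centralizer (Heis : Set (Matrix (Fin 3) (Fin 3) ℤ)ˣ)) := by
    rw [Subgroup.commutator_le]
    intro g₁ _ g₂ _
    rw [Subgroup.mem_comap, map_commutatorElement]
    obtain ⟨a, b, c, h1⟩ := Ψ_mem g₁
    obtain ⟨a', b', c', h2⟩ := Ψ_mem g₂
    rw [h1, h2, Munit_commutator]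
    rw [Subgroup.mem_centralizer_iff]
    rintro x ⟨p, q, r, rfl⟩
    exact (Munit_central _ _ _ _).symm
  exact hle hg

theorem F₃_le_ker : F₃ ≤ Ψ.ker := by
  show ⁅(⁅(⊤ : Subgroup F), ⊤⁆ : Subgroup F), ⊤⁆ ≤ Ψ.ker
  rw [Subgroup.commutator_le]
  intro g hg h _
  rw [MonoidHom.mem_ker, map_commutatorElement]
  have hc : Ψ h * Ψ g = Ψ g * Ψ h :=
    Subgroup.mem_centralizer_iff.mp (Heis_comm_central g hg) (Ψ h) (Ψ_mem h)
  rw [commutatorElement_def, ← hc]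
  group

/-- The induced homomorphism `ψ : H = F/F₃ → ℍ`. -/
def ψH : H →* Heis :=
  QuotientGroup.lift F₃ (Ψ.codRestrict Heis Ψ_mem)
    (fun g hg => by
      have : Ψ g = 1 := F₃_le_ker hg
      exact Subtype.ext (by simpa using this))

/-- The matrix of the image of `g ∈ H` in the Heisenberg group. -/
def mat (g : H) : Matrix (Fin 3) (Fin 3) ℤ := ((ψH g : (Matrix (Fin 3) (Fin 3) ℤ)ˣ) : Matrix (Fin 3) (Fin 3) ℤ)

/-- `a(g)`: the exponent sum of `α` in `g` (the `(0,1)` entry of the Heisenberg matrix). -/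
def aH (g : H) : ℤ := mat g 0 1

/-- `b(g)`: the exponent sum of `β` in `g` (the `(1,2)` entry of the Heisenberg matrix). -/
def bH (g : H) : ℤ := mat g 1 2

/-- The Heisenberg invariant `ν(g)` of `g ∈ H`: the exponent of the central element
`[α,β]` in the unique normal form `g = [α,β]^ν α^a β^b`. -/
def νH (g : H) : ℤ := mat g 0 2 - aH g * bH g

/-- `a(g)` for a word `g` in the free group. -/
def aF (g : F) : ℤ := aH (QuotientGroup.mk g)

/-- `b(g)` for a word `g` in the free group. -/
def bF (g : F) : ℤ := bH (QuotientGroup.mk g)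

/-- The Heisenberg invariant of a word in the free group: the Heisenberg invariant of its
image in `H = F/F₃`. -/
def νF (g : F) : ℤ := νH (QuotientGroup.mk g)

/-! Words in the letters α, α⁻¹, β, β⁻¹ and foldings (RNA secondary structures). -/

/-- A letter is a pair `(x, s)` (the `FreeGroup` convention): `s = true` for a generator,
`s = false` for its inverse. -/
abbrev Letter : Type := Bool × Bool

/-- A word in the letters `α`, `α⁻¹`, `β`, `β⁻¹`. -/
abbrev Word : Type := List Letter

/-- The letter `α`. -/
def lα : Letter := (false, true)
/-- The letter `α⁻¹`. -/
def lαinv : Letter := (false, false)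
/-- The letter `β`. -/
def lβ : Letter := (true, true)
/-- The letter `β⁻¹`. -/
def lβinv : Letter := (true, false)

/-- The exponent sum of `α` in a word: #`α` − #`α⁻¹`. -/
def aw (w : Word) : ℤ := (w.count lα : ℤ) - (w.count lαinv : ℤ)

/-- The exponent sum of `β` in a word: #`β` − #`β⁻¹`. -/
def bw (w : Word) : ℤ := (w.count lβ : ℤ) - (w.count lβinv : ℤ)

/-- The cyclic subword `w(i,j)` strictly between positions `i` and `j` (`0`-indexed),
read counterclockwise: if `i < j` it is `l_{i+1} ⋯ l_{j-1}`, and if `i > j` it is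
`l_{i+1} ⋯ l_n l_1 ⋯ l_{j-1}` (0-indexed: wraps around the end). -/
def between (w : Word) (i j : ℕ) : Word :=
  if i < j then (w.drop (i + 1)).take (j - i - 1) else w.drop (i + 1) ++ w.take j

/-- A folding (RNA secondary structure without pseudo-knots) of the cyclic word `w`:
a collection of disjoint pairs `(i,j)` of positions with `l_i ∈ {α, β}` and `l_j` the
inverse letter, subject to the non-nesting (no pseudo-knot) condition. -/
structure Folding (w : Word) where
  /-- The set of paired positions. -/
  pairs : Finset (Fin w.length × Fin w.length)
  ne : ∀ p ∈ pairs, p.1 ≠ p.2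
  matched : ∀ p ∈ pairs,
    (w.get p.1 = lα ∧ w.get p.2 = lαinv) ∨ (w.get p.1 = lβ ∧ w.get p.2 = lβinv)
  disjoint : ∀ p ∈ pairs, ∀ q ∈ pairs, p ≠ q →
    p.1 ≠ q.1 ∧ p.1 ≠ q.2 ∧ p.2 ≠ q.1 ∧ p.2 ≠ q.2
  nonnested : ∀ p ∈ pairs, ∀ q ∈ pairs,
    (p.1 < q.1 ∧ q.1 < p.2 → p.1 < q.2 ∧ q.2 < p.2) ∧
    (p.2 < q.1 ∧ q.1 < p.1 → p.2 < q.2 ∧ q.2 < p.1)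

/-- A complete `α`-folding: every pair is an `α`-pair and every occurrence of the
letter `α` is paired. -/
def Folding.IsCompleteAlpha {w : Word} (𝓕 : Folding w) : Prop :=
  (∀ p ∈ 𝓕.pairs, w.get p.1 = lα) ∧
    ∀ i : Fin w.length, w.get i = lα → ∃ p ∈ 𝓕.pairs, p.1 = i


/-! Auxiliary machinery for statement 12. -/

def la (l : Letter) : ℤ := if l.1 then 0 else (if l.2 then 1 else -1)
def lb (l : Letter) : ℤ := if l.1 then (if l.2 then 1 else -1) else 0

def Aw (w : Word) : ℤ := (w.map la).sum
def Bw (w : Word) : ℤ := (w.map lb).sum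

def Cw (x : ℤ) : Word → ℤ
  | [] => 0
  | l :: t => x * lb l + Cw (x + la l) t

lemma Aw_nil : Aw [] = 0 := rfl
lemma Aw_cons (l : Letter) (t : Word) : Aw (l :: t) = la l + Aw t := by simp [Aw]
lemma Bw_cons (l : Letter) (t : Word) : Bw (l :: t) = lb l + Bw t := by simp [Bw]
lemma Aw_append (s t : Word) : Aw (s ++ t) = Aw s + Aw t := by simp [Aw]

lemma Cw_shift (w : Word) : ∀ x d : ℤ, Cw (x + d) w = Cw x w + d * Bw w := by
  induction w with
  | nil => intro x d; simp [Cw, Bw]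
  | cons l t ih =>
    intro x d
    show (x + d) * lb l + Cw (x + d + la l) t = (x * lb l + Cw (x + la l) t) + d * Bw (l :: t)
    rw [show x + d + la l = (x + la l) + d by ring, ih, Bw_cons]; ring

lemma Aw_count (w : Word) : Aw w = (w.count lα : ℤ) - (w.count lαinv : ℤ) := by
  induction w with
  | nil => simp [Aw]
  | cons l t ih =>
    rw [Aw_cons, ih]
    obtain ⟨b1, b2⟩ := l
    cases b1 <;> cases b2 <;>
      simp [la, lα, lαinv, lβ, lβinv, List.count_cons, Prod.ext_iff] <;> push_cast <;> ring

lemma Bw_count (w : Word) : Bw w = (w.count lβ : ℤ) - (w.count lβinv : ℤ) := by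
  induction w with
  | nil => simp [Bw]
  | cons l t ih =>
    rw [Bw_cons, ih]
    obtain ⟨b1, b2⟩ := l
    cases b1 <;> cases b2 <;>
      simp [lb, lα, lαinv, lβ, lβinv, List.count_cons, Prod.ext_iff] <;> push_cast <;> ring

lemma length_count (w : Word) :
    w.length = w.count lα + w.count lαinv + w.count lβ + w.count lβinv := by
  induction w with
  | nil => simp
  | cons l t ih =>
    obtain ⟨b1, b2⟩ := l
    cases b1 <;> cases b2 <;>
      simp [lα, lαinv, lβ, lβinv, List.count_cons, Prod.ext_iff, ih] <;> omega

lemma seg_sublist (w : Word) (i j : ℕ) : List.Sublist ((w.take j).drop i) w :=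
  ((w.take j).drop_sublist i).trans (w.take_sublist j)

lemma take_split (w : Word) {i j : ℕ} (hij : i ≤ j) :
    w.take j = w.take i ++ (w.take j).drop i := by
  conv_lhs => rw [← List.take_append_drop i (w.take j)]
  rw [List.take_take, min_eq_left hij]

lemma Aw_seg_bound (w : Word) (s : Word) (hs : List.Sublist s w) :
    Aw s ≤ (w.count lα : ℤ) ∧ -Aw s ≤ (w.count lαinv : ℤ) := by
  have h1 := hs.count_le lα
  have h2 := hs.count_le lαinv
  rw [Aw_count s]
  omega

lemma Aw_take_diff (w : Word) (h0 : w.count lα = w.count lαinv) (i j : ℕ) :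
    Aw (w.take j) - Aw (w.take i) ≤ (w.count lα : ℤ) := by
  rcases le_total i j with hij | hij
  · have hsplit := take_split w hij
    have heq : Aw (w.take j) = Aw (w.take i) + Aw ((w.take j).drop i) := by
      rw [← Aw_append, ← hsplit]
    have hb := (Aw_seg_bound w _ (seg_sublist w i j)).1
    omega
  · have hsplit := take_split w hij
    have heq : Aw (w.take i) = Aw (w.take j) + Aw ((w.take i).drop j) := by
      rw [← Aw_append, ← hsplit]
    have hb := (Aw_seg_bound w _ (seg_sublist w j i)).2
    omega

lemma key_bound : ∀ (w : Word) (x m M : ℤ),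
    (∀ p : Word, p <+: w → m ≤ x + Aw p ∧ x + Aw p ≤ M) →
    Cw x w ≤ M * (w.count lβ : ℤ) - m * (w.count lβinv : ℤ) := by
  intro w
  induction w with
  | nil => intro x m M _; simp [Cw]
  | cons l t ih =>
    intro x m M h
    have hx : m ≤ x ∧ x ≤ M := by
      have := h [] List.nil_prefix
      simpa [Aw_nil] using this
    have ht := ih (x + la l) m M (fun p hp => by
      obtain ⟨s, rfl⟩ := hp
      have hp2 := h (l :: p) ⟨s, rfl⟩
      rw [Aw_cons] at hp2
      constructor <;> linarith [hp2.1, hp2.2])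
    show x * lb l + Cw (x + la l) t ≤ _
    obtain ⟨b1, b2⟩ := l
    cases b1 <;> cases b2 <;>
      simp only [la, lb, lα, lαinv, lβ, lβinv, List.count_cons, Prod.ext_iff,
        if_true, if_false, Bool.false_eq_true] at ht ⊢ <;>
      simp at ht ⊢ <;> push_cast <;> linarith [hx.1, hx.2, ht]

lemma Cw_le (w : Word) (hα : w.count lα = w.count lαinv) (hβ : w.count lβ = w.count lβinv) :
    Cw 0 w ≤ (w.count lα : ℤ) * (w.count lβ : ℤ) := by
  classical
  set S : Finset ℤ := (Finset.range (w.length + 1)).image (fun j => Aw (w.take j)) with hS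
  have hne : S.Nonempty := ⟨Aw (w.take 0), Finset.mem_image.2 ⟨0, by simp, rfl⟩⟩
  set M : ℤ := S.max' hne with hM
  obtain ⟨j0, _, hj0⟩ := Finset.mem_image.1 (S.max'_mem hne)
  have hbound := key_bound w 0 (M - (w.count lα : ℤ)) M (fun p hp => by
    have hpt : p = w.take p.length := List.prefix_iff_eq_take.1 hp
    have hplen : p.length ≤ w.length := hp.length_le
    have hmem : Aw p ∈ S := Finset.mem_image.2 ⟨p.length, Finset.mem_range.2 (by omega), hpt ▸ rfl⟩
    have hle : Aw p ≤ M := S.le_max' _ hmem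
    have hge : M - (w.count lα : ℤ) ≤ Aw p := by
      have := Aw_take_diff w hα p.length j0
      rw [← hpt, hj0] at this
      omega
    exact ⟨by simpa using hge, by simpa using hle⟩)
  have : M * (w.count lβ : ℤ) - (M - (w.count lα : ℤ)) * (w.count lβinv : ℤ)
      = (w.count lα : ℤ) * (w.count lβ : ℤ) := by rw [← Nat.cast_inj (R := ℤ)] at hβ; rw [← hβ]; ring
  linarith [hbound, this.le]


lemma letter_unit (l : Letter) :
    (cond l.2 ((if l.1 then Munit 0 1 0 else Munit 1 0 0))
      ((if l.1 then Munit 0 1 0 else Munit 1 0 0))⁻¹) = Munit (la l) (lb l) 0 := by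
  obtain ⟨b1, b2⟩ := l
  cases b1 <;> cases b2 <;>
    simp [la, lb, Munit_inv] <;> exact Munit_congr (by ring) (by ring) (by ring)

lemma Ψ_mk (w : Word) : Ψ (FreeGroup.mk w) = ↑(Munit (Aw w) (Bw w) (Cw 0 w)) := by
  rw [Ψ, FreeGroup.lift_mk]
  induction w with
  | nil =>
    show (1 : (Matrix (Fin 3) (Fin 3) ℤ)ˣ) = Munit (Aw []) (Bw []) (Cw 0 [])
    rw [show Aw [] = 0 from rfl, show Bw [] = 0 from rfl, show Cw 0 [] = 0 from rfl, Munit_one]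
  | cons l t ih =>
    rw [List.map_cons, List.prod_cons, ih, letter_unit, Munit_mul]
    refine Munit_congr (Aw_cons l t).symm (Bw_cons l t).symm ?_
    have hrfl : Cw 0 (l :: t) = 0 * lb l + Cw (0 + la l) t := rfl
    rw [hrfl, Cw_shift]
    ring

lemma mat_mk (w : Word) :
    mat (QuotientGroup.mk (FreeGroup.mk w)) = Mmat (Aw w) (Bw w) (Cw 0 w) := by
  show ((ψH (QuotientGroup.mk (FreeGroup.mk w)) : (Matrix (Fin 3) (Fin 3) ℤ)ˣ) :
    Matrix (Fin 3) (Fin 3) ℤ) = _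
  show ((Ψ (FreeGroup.mk w) : (Matrix (Fin 3) (Fin 3) ℤ)ˣ) : Matrix (Fin 3) (Fin 3) ℤ) = _
  rw [Ψ_mk]
  rfl

lemma Mmat01 (a b c : ℤ) : Mmat a b c 0 1 = a := by simp [Mmat]
lemma Mmat12 (a b c : ℤ) : Mmat a b c 1 2 = b := by simp [Mmat]
lemma Mmat02 (a b c : ℤ) : Mmat a b c 0 2 = c := by simp [Mmat]

lemma aF_mk (w : Word) : aF (FreeGroup.mk w) = Aw w := by
  rw [aF, aH, mat_mk, Mmat01]

lemma bF_mk (w : Word) : bF (FreeGroup.mk w) = Bw w := by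
  rw [bF, bH, mat_mk, Mmat12]

lemma νF_mk (w : Word) : νF (FreeGroup.mk w) = Cw 0 w - Aw w * Bw w := by
  rw [νF, νH, aH, bH, mat_mk, Mmat01, Mmat12, Mmat02]

/-- for a word `g` of length `n` with `a(g) = b(g) = 0`, with `n_α`
(resp. `n_β`) the number of letters `α` (resp. `β`), one has
`ν(g) ≤ n_α n_β ≤ (n/4)²` (the latter stated as `16 n_α n_β ≤ n²`). -/
theorem statement_12 (w : Word) (ha : aF (FreeGroup.mk w) = 0) (hb : bF (FreeGroup.mk w) = 0) :
    νF (FreeGroup.mk w) ≤ (w.count lα : ℤ) * (w.count lβ : ℤ) ∧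
    16 * ((w.count lα : ℤ) * (w.count lβ : ℤ)) ≤ (w.length : ℤ) ^ 2 := by
  rw [aF_mk, Aw_count] at ha
  rw [bF_mk, Bw_count] at hb
  have hα : w.count lα = w.count lαinv := by omega
  have hβ : w.count lβ = w.count lβinv := by omega
  constructor
  · rw [νF_mk, Aw_count, Bw_count, ha, hb]
    simpa using Cw_le w hα hβ
  · have hlen := length_count w
    have h1 : (w.length : ℤ) = 2 * (w.count lα : ℤ) + 2 * (w.count lβ : ℤ) := by
      rw [hlen]; push_cast; omega
    rw [h1]
    nlinarith [sq_nonneg ((w.count lα : ℤ) - (w.count lβ : ℤ)),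
      Int.natCast_nonneg (w.count lα), Int.natCast_nonneg (w.count lβ)]

end
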